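/- Let α, δ ∈ ℝ, β > 0, and let λ ≥ 0 satisfy λ = 0 if α² + 3βδ > 0 and λ > 2√(−(α² + 3βδ))/(3β) if α² + 3βδ ≤ 0. Set c₋ := (α − √(3β²λ² + α² + 3βδ))/(3β), s(m) := √(3(m − α/(3β))² − (α² + 3βδ)/(3β²)) for m ≤ c₋, p(m; z) := e^{−z·s(m)}, and φ(m; x, y, t) := m(x − y) + t(−8βm³ + 8αm² + 2(δ − α²/β)m − αδ/β). Define K(x, y, z, t) := ∫_{−∞}^{c₋} e^{iφ(m; x, y, t)} p(m; z) dm for x, z > 0 and y, t ∈ ℝ. Then there exists a constant C > 0, depending only on α, β, δ, λ, such that |K(x, y, z, t)| ≤ C |t|^{−1/3} for all x, z > 0, y ∈ ℝ, and t ≠ 0. -/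

import Mathlib

open MeasureTheory

/-- `c₋ = (α − √(3β²λ² + α² + 3βδ))/(3β)`. -/
noncomputable def cMinus (α β δ lam : ℝ) : ℝ :=
  (α - Real.sqrt (3 * β ^ 2 * lam ^ 2 + α ^ 2 + 3 * β * δ)) / (3 * β)

/-- `s(m) = √(3(m − α/(3β))² − (α² + 3βδ)/(3β²))`. -/
noncomputable def sHNLS (α β δ : ℝ) (m : ℝ) : ℝ :=
  Real.sqrt (3 * (m - α / (3 * β)) ^ 2 - (α ^ 2 + 3 * β * δ) / (3 * β ^ 2))

/-- The phase `φ(m; x, y, t) = m(x − y) + t(−8βm³ + 8αm² + 2(δ − α²/β)m − αδ/β)`. -/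
noncomputable def phaseHNLS (α β δ : ℝ) (m x y t : ℝ) : ℝ :=
  m * (x - y) + t * (-8 * β * m ^ 3 + 8 * α * m ^ 2 + 2 * (δ - α ^ 2 / β) * m - α * δ / β)

/-- The oscillatory kernel `K(x, y, z, t) = ∫_{−∞}^{c₋} e^{iφ(m;x,y,t)} e^{−z·s(m)} dm`. -/
noncomputable def kernelHNLS (α β δ lam : ℝ) (x y z t : ℝ) : ℂ :=
  ∫ m in Set.Iic (cMinus α β δ lam),
    Complex.exp (Complex.I * (phaseHNLS α β δ m x y t : ℂ)) *
      ((Real.exp (-(z * sHNLS α β δ m)) : ℝ) : ℂ)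

set_option maxHeartbeats 1000000

section VdCHelpers
open MeasureTheory Set intervalIntegral Complex

noncomputable section VdC

/-- cubic polynomial and its derivatives -/
def cub (c3 c2 c1 c0 m : ℝ) : ℝ := c3*m^3 + c2*m^2 + c1*m + c0
def cub1 (c3 c2 c1 m : ℝ) : ℝ := 3*c3*m^2 + 2*c2*m + c1
def cub2 (c3 c2 m : ℝ) : ℝ := 6*c3*m + 2*c2

variable {c3 c2 c1 c0 : ℝ}

lemma hasDerivAt_cub (m : ℝ) : HasDerivAt (cub c3 c2 c1 c0) (cub1 c3 c2 c1 m) m := by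
  have h := (((hasDerivAt_pow 3 m).const_mul c3).add
      (((hasDerivAt_pow 2 m).const_mul c2).add (((hasDerivAt_id m).const_mul c1).add
        (hasDerivAt_const m c0))))
  have heq : cub c3 c2 c1 c0 = fun x => c3 * x ^ 3 + (c2 * x ^ 2 + (c1 * id x + c0)) := by
    funext x; simp [cub, id]; ring
  rw [heq]
  refine h.congr_deriv ?_
  simp [cub1]; push_cast; ring

lemma hasDerivAt_cub1 (m : ℝ) : HasDerivAt (cub1 c3 c2 c1) (cub2 c3 c2 m) m := by
  have h := (((hasDerivAt_pow 2 m).const_mul (3*c3)).add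
      (((hasDerivAt_id m).const_mul (2*c2)).add (hasDerivAt_const m c1)))
  have heq : cub1 c3 c2 c1 = fun x => 3*c3 * x ^ 2 + (2*c2 * id x + c1) := by
    funext x; simp [cub1, id]; ring
  rw [heq]
  refine h.congr_deriv ?_
  simp [cub2]; push_cast; ring

lemma cont_cub : Continuous (cub c3 c2 c1 c0) := by unfold cub; continuity
lemma cont_cub1 : Continuous (cub1 c3 c2 c1) := by unfold cub1; continuity
lemma cont_cub2 : Continuous (cub2 c3 c2) := by unfold cub2; continuity

/-- the oscillatory integrand -/
def oscf (c3 c2 c1 c0 : ℝ) (m : ℝ) : ℂ := Complex.exp (Complex.I * (cub c3 c2 c1 c0 m : ℂ))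

lemma cont_oscf : Continuous (oscf c3 c2 c1 c0) := by
  unfold oscf
  exact Complex.continuous_exp.comp (continuous_const.mul (Complex.continuous_ofReal.comp cont_cub))

lemma norm_oscf (m : ℝ) : ‖oscf c3 c2 c1 c0 m‖ = 1 := by
  unfold oscf
  rw [Complex.norm_exp]
  simp

lemma norm_osc_le_length {a b : ℝ} (hab : a ≤ b) :
    ‖∫ m in a..b, oscf c3 c2 c1 c0 m‖ ≤ b - a := by
  have := intervalIntegral.norm_integral_le_of_norm_le_const (a := a) (b := b) (C := 1)
      (f := oscf c3 c2 c1 c0) (fun x _ => le_of_eq (norm_oscf x))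
  rwa [one_mul, _root_.abs_of_nonneg (show (0:ℝ) ≤ b - a by linarith)] at this


/-- First-order van der Corput for the cubic phase. -/
lemma vdc1 {a b lam0 : ℝ} (hab : a ≤ b) (hl : 0 < lam0)
    (hP1 : (∀ m ∈ Icc a b, lam0 ≤ cub1 c3 c2 c1 m) ∨ (∀ m ∈ Icc a b, cub1 c3 c2 c1 m ≤ -lam0))
    (hP2 : (∀ m ∈ Icc a b, 0 ≤ cub2 c3 c2 m) ∨ (∀ m ∈ Icc a b, cub2 c3 c2 m ≤ 0)) :
    ‖∫ m in a..b, oscf c3 c2 c1 c0 m‖ ≤ 3 / lam0 := by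
  set P := cub c3 c2 c1 c0
  set P1 := cub1 c3 c2 c1
  set P2 := cub2 c3 c2
  have hne : ∀ m ∈ Icc a b, P1 m ≠ 0 := by
    intro m hm
    rcases hP1 with h | h
    · exact ne_of_gt (lt_of_lt_of_le hl (h m hm))
    · exact ne_of_lt (lt_of_le_of_lt (h m hm) (by linarith))
  have habs : ∀ m ∈ Icc a b, lam0 ≤ |P1 m| := by
    intro m hm
    rcases hP1 with h | h
    · rw [_root_.abs_of_pos (lt_of_lt_of_le hl (h m hm))]; exact h m hm
    · rw [_root_.abs_of_neg (lt_of_le_of_lt (h m hm) (by linarith))]; linarith [h m hm]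
  have huIcc : uIcc a b = Icc a b := uIcc_of_le hab
  -- F = e^{iP}/(i P1)
  set F : ℝ → ℂ := fun m => Complex.exp (Complex.I * (P m : ℂ)) / (Complex.I * (P1 m : ℂ)) with hF
  have hFderiv : ∀ m ∈ Icc a b,
      HasDerivAt F (oscf c3 c2 c1 c0 m + Complex.I * (P2 m : ℂ) * oscf c3 c2 c1 c0 m / ((P1 m : ℂ))^2) m := by
    intro m hm
    have h1 : HasDerivAt (fun m : ℝ => Complex.exp (Complex.I * (P m : ℂ)))
        (Complex.exp (Complex.I * (P m : ℂ)) * (Complex.I * (P1 m : ℂ))) m := by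
      have hP : HasDerivAt (fun m : ℝ => Complex.I * (P m : ℂ)) (Complex.I * (P1 m : ℂ)) m :=
        ((hasDerivAt_cub (c3:=c3) (c2:=c2) (c1:=c1) (c0:=c0) m).ofReal_comp).const_mul Complex.I
      exact hP.cexp
    have h2 : HasDerivAt (fun m : ℝ => Complex.I * (P1 m : ℂ)) (Complex.I * (P2 m : ℂ)) m :=
      ((hasDerivAt_cub1 (c3:=c3) (c2:=c2) (c1:=c1) m).ofReal_comp).const_mul Complex.I
    have hv : Complex.I * (P1 m : ℂ) ≠ 0 :=
      mul_ne_zero Complex.I_ne_zero (by exact_mod_cast hne m hm)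
    have := h1.div h2 hv
    refine this.congr_deriv (Eq.symm ?_)
    have hP1ne : (P1 m : ℂ) ≠ 0 := by exact_mod_cast hne m hm
    field_simp [oscf]
    ring_nf
    have hI3 : (Complex.I)^3 = -Complex.I := by
      simp [pow_succ, Complex.I_mul_I]
    rw [Complex.I_sq]; unfold oscf; ring
  set g : ℝ → ℂ := fun m => Complex.I * (P2 m : ℂ) * oscf c3 c2 c1 c0 m / ((P1 m : ℂ))^2 with hg
  have hcontg : ContinuousOn g (Icc a b) := by
    apply ContinuousOn.div
    · exact (continuous_const.mul (Complex.continuous_ofReal.comp cont_cub2)).continuousOn.mul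
        cont_oscf.continuousOn
    · exact ((Complex.continuous_ofReal.comp cont_cub1).pow 2).continuousOn
    · intro m hm
      exact pow_ne_zero 2 (by exact_mod_cast hne m hm)
  have hint_osc : IntervalIntegrable (oscf c3 c2 c1 c0) volume a b :=
    cont_oscf.intervalIntegrable a b
  have hint_g : IntervalIntegrable g volume a b := by
    apply ContinuousOn.intervalIntegrable
    rwa [huIcc]
  have key : (∫ m in a..b, (oscf c3 c2 c1 c0 m + g m)) = F b - F a := by
    apply intervalIntegral.integral_eq_sub_of_hasDerivAt
    · rw [huIcc]; exact hFderiv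
    · exact hint_osc.add hint_g
  rw [intervalIntegral.integral_add hint_osc hint_g] at key
  have hsplit : (∫ m in a..b, oscf c3 c2 c1 c0 m) = F b - F a - ∫ m in a..b, g m := by
    rw [← key]; ring
  -- bound ‖F m‖
  have hnF : ∀ m ∈ Icc a b, ‖F m‖ ≤ 1 / lam0 := by
    intro m hm
    have h1 : ‖F m‖ = 1 / |P1 m| := by
      simp only [hF, norm_div, norm_mul, Complex.norm_I, Complex.norm_exp,
        Complex.norm_real]
      simp
    rw [h1]
    apply one_div_le_one_div_of_le hl (habs m hm)
  -- FTC for ∫ P2/P1^2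
  have hGderiv : ∀ m ∈ Icc a b, HasDerivAt (fun m => -((P1 m : ℝ))⁻¹) (P2 m / (P1 m)^2) m := by
    intro m hm
    have h := ((hasDerivAt_cub1 (c3:=c3) (c2:=c2) (c1:=c1) m).inv (hne m hm)).neg
    refine h.congr_deriv (Eq.symm ?_)
    field_simp
    rfl
  have hcontP : ContinuousOn (fun m => P2 m / (P1 m)^2) (Icc a b) := by
    apply ContinuousOn.div
    · exact cont_cub2.continuousOn
    · exact (cont_cub1.pow 2).continuousOn
    · intro m hm; exact pow_ne_zero 2 (hne m hm)
  have hintP : IntervalIntegrable (fun m => P2 m / (P1 m)^2) volume a b := by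
    apply ContinuousOn.intervalIntegrable; rwa [huIcc]
  have keyP : (∫ m in a..b, P2 m / (P1 m)^2) = (P1 a)⁻¹ - (P1 b)⁻¹ := by
    have := intervalIntegral.integral_eq_sub_of_hasDerivAt (f := fun m => -((P1 m : ℝ))⁻¹)
      (f' := fun m => P2 m / (P1 m)^2) (by rw [huIcc]; exact hGderiv) hintP
    rw [this]; ring
  -- endpoint bound
  have hmema : a ∈ Icc a b := ⟨le_refl a, hab⟩
  have hmemb : b ∈ Icc a b := ⟨hab, le_refl b⟩
  have hepb : |(P1 a)⁻¹ - (P1 b)⁻¹| ≤ 1 / lam0 := by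
    rcases hP1 with h | h
    · have ha := h a hmema; have hb := h b hmemb
      have h1 : (P1 a)⁻¹ ≤ 1/lam0 := by
        rw [one_div]; exact inv_anti₀ hl ha
      have h2 : (P1 b)⁻¹ ≤ 1/lam0 := by
        rw [one_div]; exact inv_anti₀ hl hb
      have h3 : 0 < (P1 a)⁻¹ := inv_pos.2 (lt_of_lt_of_le hl ha)
      have h4 : 0 < (P1 b)⁻¹ := inv_pos.2 (lt_of_lt_of_le hl hb)
      rw [abs_sub_le_iff]; constructor <;> linarith
    · have ha := h a hmema; have hb := h b hmemb
      have hl' : 0 < -lam0 → False := by intro hc; linarith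
      have h3 : (P1 a)⁻¹ < 0 := (inv_neg'').2 (by linarith)
      have h4 : (P1 b)⁻¹ < 0 := (inv_neg'').2 (by linarith)
      have h1 : -(1/lam0) ≤ (P1 a)⁻¹ := by
        have : (P1 a)⁻¹ = -((-P1 a)⁻¹) := by rw [← inv_neg]; ring_nf
        rw [this, neg_le_neg_iff, one_div]
        exact inv_anti₀ hl (by linarith)
      have h2 : -(1/lam0) ≤ (P1 b)⁻¹ := by
        have : (P1 b)⁻¹ = -((-P1 b)⁻¹) := by rw [← inv_neg]; ring_nf
        rw [this, neg_le_neg_iff, one_div]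
        exact inv_anti₀ hl (by linarith)
      rw [abs_sub_le_iff]; constructor <;> linarith
  -- bound on ∫ g
  have hng : ‖∫ m in a..b, g m‖ ≤ 1 / lam0 := by
    have h1 : ‖∫ m in a..b, g m‖ ≤ ∫ m in a..b, ‖g m‖ :=
      intervalIntegral.norm_integral_le_integral_norm hab
    have h2 : ∀ m ∈ Icc a b, ‖g m‖ = |P2 m| / (P1 m)^2 := by
      intro m hm
      simp only [hg, norm_div, norm_mul, Complex.norm_I, Complex.norm_real,
        norm_pow]
      rw [show ‖oscf c3 c2 c1 c0 m‖ = 1 from norm_oscf m, Real.norm_eq_abs, Real.norm_eq_abs, _root_.sq_abs]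
      ring
    calc ‖∫ m in a..b, g m‖ ≤ ∫ m in a..b, ‖g m‖ := h1
      _ ≤ 1/lam0 := by
        rcases hP2 with h | h
        · have heq : ∀ m ∈ Icc a b, ‖g m‖ = P2 m / (P1 m)^2 := by
            intro m hm; rw [h2 m hm, _root_.abs_of_nonneg (h m hm)]
          rw [intervalIntegral.integral_congr (g := fun m => P2 m / (P1 m)^2)
            (by rw [huIcc]; exact heq), keyP]
          calc (P1 a)⁻¹ - (P1 b)⁻¹ ≤ |(P1 a)⁻¹ - (P1 b)⁻¹| := le_abs_self _
            _ ≤ 1/lam0 := hepb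
        · have heq : ∀ m ∈ Icc a b, ‖g m‖ = -(P2 m / (P1 m)^2) := by
            intro m hm; rw [h2 m hm, _root_.abs_of_nonpos (h m hm)]; ring
          rw [intervalIntegral.integral_congr (g := fun m => -(P2 m / (P1 m)^2))
            (by rw [huIcc]; exact heq), intervalIntegral.integral_neg, keyP]
          calc -((P1 a)⁻¹ - (P1 b)⁻¹) ≤ |(P1 a)⁻¹ - (P1 b)⁻¹| := neg_le_abs _
            _ ≤ 1/lam0 := hepb
  calc ‖∫ m in a..b, oscf c3 c2 c1 c0 m‖
      = ‖F b - F a - ∫ m in a..b, g m‖ := by rw [hsplit]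
    _ ≤ ‖F b - F a‖ + ‖∫ m in a..b, g m‖ := norm_sub_le _ _
    _ ≤ (‖F b‖ + ‖F a‖) + ‖∫ m in a..b, g m‖ := by gcongr; exact norm_sub_le _ _
    _ ≤ (1/lam0 + 1/lam0) + 1/lam0 := by
        gcongr
        · exact hnF b hmemb
        · exact hnF a hmema
    _ = 3 / lam0 := by ring

/-- growth of `P1` from `P2 ≥ K` -/
lemma cub1_growth {a b K : ℝ} (h2 : ∀ m ∈ Icc a b, K ≤ cub2 c3 c2 m)
    {m1 m2 : ℝ} (h1 : m1 ∈ Icc a b) (hm2 : m2 ∈ Icc a b) (h12 : m1 ≤ m2) :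
    cub1 c3 c2 c1 m1 + K * (m2 - m1) ≤ cub1 c3 c2 c1 m2 := by
  have hmono : MonotoneOn (fun m => cub1 c3 c2 c1 m - K * m) (Icc a b) := by
    apply monotoneOn_of_deriv_nonneg (convex_Icc a b)
    · exact (cont_cub1.sub (continuous_const.mul continuous_id)).continuousOn
    · intro m _
      exact ((hasDerivAt_cub1 m).sub ((hasDerivAt_id m).const_mul K)).differentiableAt.differentiableWithinAt
    · intro m hm
      rw [interior_Icc] at hm
      have hd : deriv (fun m => cub1 c3 c2 c1 m - K * m) m = cub2 c3 c2 m - K * 1 := by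
        exact ((hasDerivAt_cub1 m).sub ((hasDerivAt_id m).const_mul K)).deriv
      rw [hd]
      have := h2 m (Ioo_subset_Icc_self hm)
      linarith
  have := hmono h1 hm2 h12
  simp only at this
  linarith

lemma vdc2pos {a b mu : ℝ} (hab : a ≤ b) (hmu : 0 < mu)
    (h2 : ∀ m ∈ Icc a b, mu^2 ≤ cub2 c3 c2 m) :
    ‖∫ m in a..b, oscf c3 c2 c1 c0 m‖ ≤ 8 / mu := by
  set P1 := cub1 c3 c2 c1 with hP1def
  have h2nn : (∀ m ∈ Icc a b, 0 ≤ cub2 c3 c2 m) := fun m hm => le_trans (sq_nonneg mu) (h2 m hm)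
  have hma : a ∈ Icc a b := ⟨le_refl a, hab⟩
  have hmb : b ∈ Icc a b := ⟨hab, le_refl b⟩
  have hintosc : ∀ u v : ℝ, IntervalIntegrable (oscf c3 c2 c1 c0) volume u v :=
    fun u v => cont_oscf.intervalIntegrable u v
  have h38 : (3:ℝ)/mu ≤ 8/mu := by gcongr <;> norm_num
  have h28 : (2:ℝ)/mu ≤ 8/mu := by gcongr <;> norm_num
  have h58 : (5:ℝ)/mu ≤ 8/mu := by gcongr <;> norm_num
  have hcont1 : ContinuousOn P1 (Icc a b) := cont_cub1.continuousOn
  by_cases hA : mu ≤ P1 a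
  · refine le_trans (vdc1 hab hmu (Or.inl ?_) (Or.inl h2nn)) h38
    intro m hm
    have := cub1_growth (c1 := c1) h2 hma hm hm.1
    nlinarith [mul_nonneg (sq_nonneg mu) (sub_nonneg.2 hm.1)]
  by_cases hB : P1 b ≤ -mu
  · refine le_trans (vdc1 hab hmu (Or.inr ?_) (Or.inl h2nn)) h38
    intro m hm
    have := cub1_growth (c1 := c1) h2 hm hmb hm.2
    nlinarith [mul_nonneg (sq_nonneg mu) (sub_nonneg.2 hm.2)]
  push_neg at hA hB
  by_cases hC : -mu < P1 a
  · by_cases hD : P1 b < mu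
    · -- whole interval short
      have hgrow := cub1_growth (c1 := c1) h2 hma hmb hab
      have hlen : b - a ≤ 2/mu := by
        rw [le_div_iff₀ hmu]
        nlinarith
      exact le_trans (norm_osc_le_length hab) (le_trans hlen h28)
    · push_neg at hD
      -- IVT for value mu
      obtain ⟨v, hv, hPv⟩ : ∃ v ∈ Icc a b, P1 v = mu := by
        have := intermediate_value_Icc hab hcont1
        have hmem : mu ∈ Icc (P1 a) (P1 b) := ⟨le_of_lt hA, hD⟩
        obtain ⟨v, hv1, hv2⟩ := this hmem
        exact ⟨v, hv1, hv2⟩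
      have hsplit : (∫ m in a..v, oscf c3 c2 c1 c0 m) + (∫ m in v..b, oscf c3 c2 c1 c0 m)
          = ∫ m in a..b, oscf c3 c2 c1 c0 m := integral_add_adjacent_intervals (hintosc a v) (hintosc v b)
      have hlen : v - a ≤ 2/mu := by
        have hgrow := cub1_growth (c1 := c1) h2 hma hv hv.1
        rw [le_div_iff₀ hmu]
        nlinarith
      have hright : ‖∫ m in v..b, oscf c3 c2 c1 c0 m‖ ≤ 3/mu := by
        apply vdc1 hv.2 hmu (Or.inl ?_) (Or.inl (fun m hm => h2nn m ⟨le_trans hv.1 hm.1, hm.2⟩))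
        intro m hm
        have hmab : m ∈ Icc a b := ⟨le_trans hv.1 hm.1, hm.2⟩
        have := cub1_growth (c1 := c1) h2 hv hmab hm.1
        nlinarith [mul_nonneg (sq_nonneg mu) (sub_nonneg.2 hm.1)]
      calc ‖∫ m in a..b, oscf c3 c2 c1 c0 m‖
          = ‖(∫ m in a..v, oscf c3 c2 c1 c0 m) + (∫ m in v..b, oscf c3 c2 c1 c0 m)‖ := by rw [hsplit]
        _ ≤ ‖∫ m in a..v, oscf c3 c2 c1 c0 m‖ + ‖∫ m in v..b, oscf c3 c2 c1 c0 m‖ := norm_add_le _ _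
        _ ≤ 2/mu + 3/mu := by
            gcongr
            exact le_trans (norm_osc_le_length hv.1) hlen
        _ ≤ 8/mu := by rw [← add_div]; gcongr <;> norm_num
  · push_neg at hC
    obtain ⟨u, hu, hPu⟩ : ∃ u ∈ Icc a b, P1 u = -mu := by
      have := intermediate_value_Icc hab hcont1
      have hmem : -mu ∈ Icc (P1 a) (P1 b) := ⟨hC, le_of_lt hB⟩
      obtain ⟨u, hu1, hu2⟩ := this hmem
      exact ⟨u, hu1, hu2⟩
    have hleft : ‖∫ m in a..u, oscf c3 c2 c1 c0 m‖ ≤ 3/mu := by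
      apply vdc1 hu.1 hmu (Or.inr ?_) (Or.inl (fun m hm => h2nn m ⟨hm.1, le_trans hm.2 hu.2⟩))
      intro m hm
      have hmab : m ∈ Icc a b := ⟨hm.1, le_trans hm.2 hu.2⟩
      have := cub1_growth (c1 := c1) h2 hmab hu hm.2
      nlinarith [mul_nonneg (sq_nonneg mu) (sub_nonneg.2 hm.2)]
    by_cases hD : P1 b < mu
    · have hsplit : (∫ m in a..u, oscf c3 c2 c1 c0 m) + (∫ m in u..b, oscf c3 c2 c1 c0 m)
          = ∫ m in a..b, oscf c3 c2 c1 c0 m := integral_add_adjacent_intervals (hintosc a u) (hintosc u b)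
      have hlen : b - u ≤ 2/mu := by
        have hgrow := cub1_growth (c1 := c1) h2 hu hmb hu.2
        rw [le_div_iff₀ hmu]
        nlinarith
      calc ‖∫ m in a..b, oscf c3 c2 c1 c0 m‖
          = ‖(∫ m in a..u, oscf c3 c2 c1 c0 m) + (∫ m in u..b, oscf c3 c2 c1 c0 m)‖ := by rw [hsplit]
        _ ≤ ‖∫ m in a..u, oscf c3 c2 c1 c0 m‖ + ‖∫ m in u..b, oscf c3 c2 c1 c0 m‖ := norm_add_le _ _
        _ ≤ 3/mu + 2/mu := by
            gcongr
            exact le_trans (norm_osc_le_length hu.2) hlen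
        _ ≤ 8/mu := by rw [← add_div]; gcongr <;> norm_num
    · push_neg at hD
      obtain ⟨v, hv, hPv⟩ : ∃ v ∈ Icc a b, P1 v = mu := by
        have := intermediate_value_Icc hab hcont1
        have hmem : mu ∈ Icc (P1 a) (P1 b) := ⟨by linarith, hD⟩
        obtain ⟨v, hv1, hv2⟩ := this hmem
        exact ⟨v, hv1, hv2⟩
      have huv : u ≤ v := by
        by_contra hcon
        push_neg at hcon
        have := cub1_growth (c1 := c1) h2 hv hu (le_of_lt hcon)
        nlinarith [mul_nonneg (sq_nonneg mu) (sub_nonneg.2 (le_of_lt hcon))]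
      have hlen : v - u ≤ 2/mu := by
        have hgrow := cub1_growth (c1 := c1) h2 hu hv huv
        rw [le_div_iff₀ hmu]
        nlinarith
      have hright : ‖∫ m in v..b, oscf c3 c2 c1 c0 m‖ ≤ 3/mu := by
        apply vdc1 hv.2 hmu (Or.inl ?_) (Or.inl (fun m hm => h2nn m ⟨le_trans hv.1 hm.1, hm.2⟩))
        intro m hm
        have hmab : m ∈ Icc a b := ⟨le_trans hv.1 hm.1, hm.2⟩
        have := cub1_growth (c1 := c1) h2 hv hmab hm.1
        nlinarith [mul_nonneg (sq_nonneg mu) (sub_nonneg.2 hm.1)]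
      have hsplit1 : (∫ m in a..u, oscf c3 c2 c1 c0 m) + (∫ m in u..b, oscf c3 c2 c1 c0 m)
          = ∫ m in a..b, oscf c3 c2 c1 c0 m := integral_add_adjacent_intervals (hintosc a u) (hintosc u b)
      have hsplit2 : (∫ m in u..v, oscf c3 c2 c1 c0 m) + (∫ m in v..b, oscf c3 c2 c1 c0 m)
          = ∫ m in u..b, oscf c3 c2 c1 c0 m := integral_add_adjacent_intervals (hintosc u v) (hintosc v b)
      calc ‖∫ m in a..b, oscf c3 c2 c1 c0 m‖
          = ‖(∫ m in a..u, oscf c3 c2 c1 c0 m) + ((∫ m in u..v, oscf c3 c2 c1 c0 m) + (∫ m in v..b, oscf c3 c2 c1 c0 m))‖ := by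
            rw [hsplit2, hsplit1]
        _ ≤ ‖∫ m in a..u, oscf c3 c2 c1 c0 m‖ + (‖∫ m in u..v, oscf c3 c2 c1 c0 m‖ + ‖∫ m in v..b, oscf c3 c2 c1 c0 m‖) :=
            le_trans (norm_add_le _ _) (by gcongr; exact norm_add_le _ _)
        _ ≤ 3/mu + (2/mu + 3/mu) := by
            gcongr
            exact le_trans (norm_osc_le_length huv) hlen
        _ = 8/mu := by ring

/-- conjugation symmetry -/
lemma osc_neg_norm (a b : ℝ) :
    ‖∫ m in a..b, oscf (-c3) (-c2) (-c1) (-c0) m‖ = ‖∫ m in a..b, oscf c3 c2 c1 c0 m‖ := by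
  have hpt : ∀ m : ℝ, oscf (-c3) (-c2) (-c1) (-c0) m = (starRingEnd ℂ) (oscf c3 c2 c1 c0 m) := by
    intro m
    unfold oscf
    rw [← Complex.exp_conj]
    congr 1
    rw [map_mul, Complex.conj_I, Complex.conj_ofReal]
    unfold cub
    push_cast
    ring
  simp only [hpt]
  have : (∫ m in a..b, (starRingEnd ℂ) (oscf c3 c2 c1 c0 m))
      = (starRingEnd ℂ) (∫ m in a..b, oscf c3 c2 c1 c0 m) := by
    simp only [intervalIntegral]
    rw [integral_conj, integral_conj, map_sub]
  rw [this, RCLike.norm_conj]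

/-- second-order vdc, both signs -/
lemma vdc2 {a b mu : ℝ} (hab : a ≤ b) (hmu : 0 < mu)
    (h2 : (∀ m ∈ Icc a b, mu^2 ≤ cub2 c3 c2 m) ∨ (∀ m ∈ Icc a b, cub2 c3 c2 m ≤ -mu^2)) :
    ‖∫ m in a..b, oscf c3 c2 c1 c0 m‖ ≤ 8 / mu := by
  rcases h2 with h | h
  · exact vdc2pos hab hmu h
  · rw [← osc_neg_norm]
    apply vdc2pos hab hmu
    intro m hm
    have := h m hm
    unfold cub2 at *
    linarith

/-- third-order vdc, positive leading coefficient -/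
lemma vdc3pos {a b : ℝ} (hab : a ≤ b) (hc3 : 0 < c3) :
    ‖∫ m in a..b, oscf c3 c2 c1 c0 m‖ ≤ 18 / (6*c3) ^ ((1:ℝ)/3) := by
  set B := 6*c3 with hBdef
  have hB : 0 < B := by positivity
  set mu := B ^ ((1:ℝ)/3) with hmudef
  have hmu : 0 < mu := Real.rpow_pos_of_pos hB _
  have hmu3 : mu^3 = B := by
    rw [hmudef, ← Real.rpow_natCast (B ^ ((1:ℝ)/3)) 3, ← Real.rpow_mul (le_of_lt hB)]
    norm_num
  set m0 := -c2/(3*c3) with hm0def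
  have hP2eq : ∀ m : ℝ, cub2 c3 c2 m = B * (m - m0) := by
    intro m; unfold cub2; rw [hBdef, hm0def]; field_simp; ring
  set r := 1/mu with hrdef
  have hr : 0 < r := by positivity
  set a' := max a (min b (m0 - r)) with ha'def
  set b' := max a (min b (m0 + r)) with hb'def
  have haa' : a ≤ a' := le_max_left _ _
  have ha'b' : a' ≤ b' := by
    apply max_le_max (le_refl a)
    apply min_le_min (le_refl b)
    linarith
  have hb'b : b' ≤ b := by
    apply max_le hab (min_le_left _ _)
  have ha'b : a' ≤ b := le_trans ha'b' hb'b
  have hintosc : ∀ u v : ℝ, IntervalIntegrable (oscf c3 c2 c1 c0) volume u v :=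
    fun u v => cont_oscf.intervalIntegrable u v
  -- left piece
  have hleft : ‖∫ m in a..a', oscf c3 c2 c1 c0 m‖ ≤ 8/mu := by
    rcases eq_or_lt_of_le haa' with h | h
    · rw [← h, intervalIntegral.integral_same]; simp; positivity
    · apply vdc2 (le_of_lt h) hmu
      right
      intro m hm
      have ha'le : a' ≤ m0 - r := by
        rcases le_or_gt (min b (m0 - r)) a with hca | hca
        · exfalso; rw [ha'def, max_eq_left hca] at h; exact lt_irrefl a h
        · rw [ha'def, max_eq_right (le_of_lt hca)]; exact min_le_right _ _
      rw [hP2eq m]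
      have hm' : m ≤ m0 - r := le_trans hm.2 ha'le
      have : B * (m - m0) ≤ B * (-r) := by
        apply mul_le_mul_of_nonneg_left (by linarith) (le_of_lt hB)
      have hBr : B * r = mu^2 := by
        rw [hrdef]
        field_simp
        rw [← hmu3]
      nlinarith
  -- middle piece
  have hmidlen : b' - a' ≤ 2*r := by
    have h1 : min b (m0 + r) ≤ min b (m0 - r) + 2*r := by
      rcases le_total b (m0 - r) with h | h
      · rw [min_eq_left h]
        exact le_trans (min_le_left _ _) (by linarith)
      · rw [min_eq_right h]
        exact le_trans (min_le_right _ _) (by linarith)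
    have h2 : min b (m0 - r) + 2*r ≤ a' + 2*r := by
      have := le_max_right a (min b (m0 - r))
      rw [ha'def]; linarith
    have h3 : a ≤ a' + 2*r := by linarith
    rw [hb'def]
    have := max_le h3 (le_trans h1 h2)
    linarith
  have hmid : ‖∫ m in a'..b', oscf c3 c2 c1 c0 m‖ ≤ 2/mu := by
    refine le_trans (norm_osc_le_length ha'b') (le_trans hmidlen ?_)
    rw [hrdef]; ring_nf; rfl
  -- right piece
  have hright : ‖∫ m in b'..b, oscf c3 c2 c1 c0 m‖ ≤ 8/mu := by
    rcases eq_or_lt_of_le hb'b with h | h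
    · rw [h, intervalIntegral.integral_same]; simp; positivity
    · apply vdc2 (le_of_lt h) hmu
      left
      intro m hm
      have hb'ge : m0 + r ≤ b' := by
        rcases le_or_gt b (m0 + r) with hcb | hcb
        · exfalso
          rw [hb'def, min_eq_left hcb, max_eq_right hab] at h
          exact lt_irrefl b h
        · rw [hb'def, min_eq_right (le_of_lt hcb)]
          exact le_max_right _ _
      rw [hP2eq m]
      have hm' : m0 + r ≤ m := le_trans hb'ge hm.1
      have hBr : B * r = mu^2 := by
        rw [hrdef]
        field_simp
        rw [← hmu3]
      have : B * r ≤ B * (m - m0) := by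
        apply mul_le_mul_of_nonneg_left (by linarith) (le_of_lt hB)
      linarith
  -- assemble
  have hs1 : (∫ m in a..a', oscf c3 c2 c1 c0 m) + (∫ m in a'..b, oscf c3 c2 c1 c0 m)
      = ∫ m in a..b, oscf c3 c2 c1 c0 m := integral_add_adjacent_intervals (hintosc a a') (hintosc a' b)
  have hs2 : (∫ m in a'..b', oscf c3 c2 c1 c0 m) + (∫ m in b'..b, oscf c3 c2 c1 c0 m)
      = ∫ m in a'..b, oscf c3 c2 c1 c0 m := integral_add_adjacent_intervals (hintosc a' b') (hintosc b' b)
  have hfin : ‖∫ m in a..b, oscf c3 c2 c1 c0 m‖ ≤ 18/mu := by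
    calc ‖∫ m in a..b, oscf c3 c2 c1 c0 m‖
        = ‖(∫ m in a..a', oscf c3 c2 c1 c0 m) + ((∫ m in a'..b', oscf c3 c2 c1 c0 m) + (∫ m in b'..b, oscf c3 c2 c1 c0 m))‖ := by
          rw [hs2, hs1]
      _ ≤ ‖∫ m in a..a', oscf c3 c2 c1 c0 m‖ + (‖∫ m in a'..b', oscf c3 c2 c1 c0 m‖ + ‖∫ m in b'..b, oscf c3 c2 c1 c0 m‖) :=
          le_trans (norm_add_le _ _) (by gcongr; exact norm_add_le _ _)
      _ ≤ 8/mu + (2/mu + 8/mu) := by gcongr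
      _ = 18/mu := by ring
  exact hfin

/-- third-order van der Corput for a cubic phase -/
lemma vdc3 {a b : ℝ} (hab : a ≤ b) (hc3 : c3 ≠ 0) :
    ‖∫ m in a..b, oscf c3 c2 c1 c0 m‖ ≤ 18 / (6*|c3|) ^ ((1:ℝ)/3) := by
  rcases lt_or_gt_of_ne hc3 with h | h
  · have hn := osc_neg_norm (c3 := c3) (c2 := c2) (c1 := c1) (c0 := c0) a b
    rw [← hn]
    have := vdc3pos (c3 := -c3) (c2 := -c2) (c1 := -c1) (c0 := -c0) hab (by linarith)
    rwa [show (6:ℝ)*(-c3) = 6*|c3| by rw [abs_of_neg h]] at this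
  · have := vdc3pos (c3 := c3) (c2 := c2) (c1 := c1) (c0 := c0) hab h
    rwa [show (6:ℝ)*c3 = 6*|c3| by rw [abs_of_pos h]] at this

lemma kernel_bound (hc3 : c3 ≠ 0) (L : ℝ) (p : ℝ → ℝ)
    (hcont : Continuous p) (hpos : ∀ m, 0 < p m) (hone : ∀ m, p m ≤ 1)
    (hmono : ∀ m1 m2, m1 ≤ m2 → m2 ≤ L → p m1 ≤ p m2)
    (hint : IntegrableOn p (Iic L) volume)
    (htend : Filter.Tendsto p Filter.atBot (nhds 0)) :
    ‖∫ m in Iic L, oscf c3 c2 c1 c0 m * ((p m : ℝ) : ℂ)‖ ≤ 18 / (6*|c3|) ^ ((1:ℝ)/3) := by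
  set K := 18 / (6*|c3|) ^ ((1:ℝ)/3) with hKdef
  have hK : 0 ≤ K := by
    apply div_nonneg (by norm_num)
    positivity
  set μ := volume.restrict (Iic L) with hμdef
  set F : ℝ × ℝ → ℂ := fun q => (Set.Ioc (0:ℝ) (p q.1)).indicator (fun _ => oscf c3 c2 c1 c0 q.1) q.2
    with hFdef
  set A : Set (ℝ × ℝ) := {q : ℝ × ℝ | 0 < q.2 ∧ q.2 ≤ p q.1} with hAdef
  have hAmeas : MeasurableSet A := by
    apply MeasurableSet.inter
    · exact measurableSet_lt measurable_const measurable_snd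
    · exact measurableSet_le measurable_snd (hcont.measurable.comp measurable_fst)
  have hFeq : F = A.indicator (fun q => oscf c3 c2 c1 c0 q.1) := by
    funext q
    by_cases h : q.2 ∈ Set.Ioc (0:ℝ) (p q.1)
    · rw [hFdef]
      simp only [Set.indicator_of_mem h]
      rw [Set.indicator_of_mem]
      exact ⟨h.1, h.2⟩
    · rw [hFdef]
      simp only [Set.indicator_of_notMem h]
      rw [Set.indicator_of_notMem]
      intro hc
      exact h ⟨hc.1, hc.2⟩
  have hFmeas : AEStronglyMeasurable F (μ.prod volume) := by
    rw [hFeq]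
    exact ((cont_oscf.comp continuous_fst).stronglyMeasurable.indicator hAmeas).aestronglyMeasurable
  -- inner integral over τ equals p m • oscf
  have hinner : ∀ m : ℝ, (∫ τ : ℝ, F (m, τ)) = (p m : ℂ) * oscf c3 c2 c1 c0 m := by
    intro m
    have hres : (fun τ => F (m, τ)) = (Set.Ioc (0:ℝ) (p m)).indicator (fun _ => oscf c3 c2 c1 c0 m) := rfl
    have : (∫ τ : ℝ, F (m, τ))
        = (volume (Set.Ioc (0:ℝ) (p m))).toReal • oscf c3 c2 c1 c0 m := by
      rw [show (∫ τ : ℝ, F (m, τ)) = ∫ τ : ℝ, (Set.Ioc (0:ℝ) (p m)).indicator (fun _ => oscf c3 c2 c1 c0 m) τ from by rw [← hres]]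
      exact integral_indicator_const _ measurableSet_Ioc
    rw [this, Real.volume_Ioc, ENNReal.toReal_ofReal (by linarith [hpos m])]
    rw [sub_zero, Complex.real_smul]
  have hinner_norm : ∀ m : ℝ, (∫ τ : ℝ, ‖F (m, τ)‖) = p m := by
    intro m
    have h1 : ∀ τ : ℝ, ‖F (m, τ)‖ = (Set.Ioc (0:ℝ) (p m)).indicator (fun _ => (1:ℝ)) τ := by
      intro τ
      rw [hFdef]
      simp only
      by_cases h : τ ∈ Set.Ioc (0:ℝ) (p m)
      · rw [Set.indicator_of_mem h, Set.indicator_of_mem h, norm_oscf]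
      · rw [Set.indicator_of_notMem h, Set.indicator_of_notMem h, norm_zero]
    simp only [h1]
    rw [integral_indicator_const _ measurableSet_Ioc, measureReal_def, Real.volume_Ioc,
      ENNReal.toReal_ofReal (by linarith [hpos m]), sub_zero, smul_eq_mul, mul_one]
  have hFint : Integrable F (μ.prod volume) := by
    rw [integrable_prod_iff hFmeas]
    constructor
    · apply Filter.Eventually.of_forall
      intro m
      have hres : (fun τ => F (m, τ)) = (Set.Ioc (0:ℝ) (p m)).indicator (fun _ => oscf c3 c2 c1 c0 m) := rfl
      rw [hres]
      apply (integrable_indicator_iff measurableSet_Ioc).2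
      refine integrableOn_const ?_
      rw [Real.volume_Ioc]
      exact ENNReal.ofReal_ne_top
    · have : Integrable p μ := hint
      apply this.congr
      apply Filter.Eventually.of_forall
      intro m
      exact (hinner_norm m).symm
  -- swap
  have hker : (∫ m in Iic L, oscf c3 c2 c1 c0 m * ((p m : ℝ) : ℂ))
      = ∫ τ : ℝ, ∫ m, F (m, τ) ∂μ := by
    have h1 : (∫ m in Iic L, oscf c3 c2 c1 c0 m * ((p m : ℝ) : ℂ))
        = ∫ m, (∫ τ : ℝ, F (m, τ)) ∂μ := by
      apply MeasureTheory.integral_congr_ae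
      apply Filter.Eventually.of_forall
      intro m
      show oscf c3 c2 c1 c0 m * ((p m : ℝ) : ℂ) = ∫ (τ : ℝ), F (m, τ)
      rw [hinner m, mul_comm]
    rw [h1]
    exact integral_integral_swap hFint
  -- pointwise bound on the inner integral
  have hb : ∀ τ : ℝ, ‖∫ m, F (m, τ) ∂μ‖ ≤ (Set.Ioc (0:ℝ) 1).indicator (fun _ => K) τ := by
    intro τ
    by_cases hτ : τ ∈ Set.Ioc (0:ℝ) 1
    · rw [Set.indicator_of_mem hτ]
      have hFτ : (fun m => F (m, τ)) = ({m : ℝ | τ ≤ p m}).indicator (oscf c3 c2 c1 c0) := by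
        funext m
        by_cases h : τ ≤ p m
        · have : τ ∈ Set.Ioc (0:ℝ) (p m) := ⟨hτ.1, h⟩
          rw [show F (m, τ) = (Set.Ioc (0:ℝ) (p m)).indicator (fun _ => oscf c3 c2 c1 c0 m) τ from rfl,
            Set.indicator_of_mem this]
          rw [Set.indicator_of_mem (show m ∈ {m : ℝ | τ ≤ p m} from h)]
        · have : τ ∉ Set.Ioc (0:ℝ) (p m) := fun hc => h hc.2
          rw [show F (m, τ) = (Set.Ioc (0:ℝ) (p m)).indicator (fun _ => oscf c3 c2 c1 c0 m) τ from rfl,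
            Set.indicator_of_notMem this]
          rw [Set.indicator_of_notMem (show m ∉ {m : ℝ | τ ≤ p m} from h)]
      have hSclosed : IsClosed {m : ℝ | τ ≤ p m} := isClosed_le continuous_const hcont
      rw [hFτ, MeasureTheory.integral_indicator hSclosed.measurableSet, hμdef,
        Measure.restrict_restrict hSclosed.measurableSet]
      set S := {m : ℝ | τ ≤ p m} ∩ Iic L with hSdef
      rcases eq_empty_or_nonempty S with hS | hS
      · rw [hS]
        simp [hK]
      · have hSclosed' : IsClosed S := hSclosed.inter isClosed_Iic
        have hSbdd : BddBelow S := by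
          have hev : ∀ᶠ m in Filter.atBot, p m < τ :=
            htend.eventually_lt_const hτ.1
          obtain ⟨M, hM⟩ := Filter.eventually_atBot.1 hev
          refine ⟨M, fun m hm => ?_⟩
          by_contra hc
          push_neg at hc
          exact absurd hm.1 (not_le.2 (hM m (le_of_lt hc)))
        have hw : sInf S ∈ S := hSclosed'.csInf_mem hS hSbdd
        set w := sInf S with hwdef
        have hwL : w ≤ L := hw.2
        have hSeq : S = Icc w L := by
          apply Set.eq_of_subset_of_subset
          · intro m hm
            exact ⟨csInf_le hSbdd hm, hm.2⟩
          · intro m hm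
            exact ⟨le_trans hw.1 (hmono w m hm.1 hm.2), hm.2⟩
        rw [hSeq, integral_Icc_eq_integral_Ioc, ← intervalIntegral.integral_of_le hwL]
        exact vdc3 hwL hc3
    · rw [Set.indicator_of_notMem hτ]
      have hz : ∀ m : ℝ, F (m, τ) = 0 := by
        intro m
        have : τ ∉ Set.Ioc (0:ℝ) (p m) := by
          intro hc
          rcases not_and_or.1 ((Set.mem_Ioc).not.1 hτ) with h | h
          · exact h hc.1
          · push_neg at h
            exact absurd hc.2 (not_le.2 (lt_of_le_of_lt (hone m) h))
        rw [show F (m, τ) = (Set.Ioc (0:ℝ) (p m)).indicator (fun _ => oscf c3 c2 c1 c0 m) τ from rfl,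
          Set.indicator_of_notMem this]
      simp only [hz]
      rw [integral_zero, norm_zero]
  -- conclude
  rw [hker]
  have hind_int : Integrable ((Set.Ioc (0:ℝ) 1).indicator (fun _ => K)) volume := by
    apply (integrable_indicator_iff measurableSet_Ioc).2
    refine integrableOn_const ?_
    rw [Real.volume_Ioc]
    exact ENNReal.ofReal_ne_top
  have h1 : ‖∫ τ : ℝ, ∫ m, F (m, τ) ∂μ‖ ≤ ∫ τ : ℝ, (Set.Ioc (0:ℝ) 1).indicator (fun _ => K) τ :=
    norm_integral_le_of_norm_le hind_int (Filter.Eventually.of_forall hb)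
  refine le_trans h1 ?_
  rw [integral_indicator_const _ measurableSet_Ioc, measureReal_def, Real.volume_Ioc]
  rw [ENNReal.toReal_ofReal (by norm_num)]
  norm_num

end VdC
end VdCHelpers

open Set Filter in
/-- Dispersive estimate for the boundary kernel: `|K(x, y, z, t)| ≤ C |t|^{−1/3}` for `t ≠ 0`,
uniformly in `x, z > 0` and `y ∈ ℝ`. -/
theorem kernel_dispersive_bound (α β δ : ℝ) (hβ : 0 < β) (lam : ℝ)
    (hlam0 : 0 ≤ lam)
    (hlam1 : 0 < α ^ 2 + 3 * β * δ → lam = 0)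
    (hlam2 : α ^ 2 + 3 * β * δ ≤ 0 →
      2 * Real.sqrt (-(α ^ 2 + 3 * β * δ)) / (3 * β) < lam) :
    ∃ C > 0, ∀ x y z t : ℝ, 0 < x → 0 < z → t ≠ 0 →
      ‖kernelHNLS α β δ lam x y z t‖ ≤ C * |t| ^ (-(1 : ℝ) / 3) := by
  refine ⟨18 / (48*β) ^ ((1:ℝ)/3), by positivity, ?_⟩
  intro x y z t hx hz ht
  set L := cMinus α β δ lam with hLdef
  set sf : ℝ → ℝ := sHNLS α β δ with hsfdef
  set p : ℝ → ℝ := fun m => Real.exp (-(z * sf m)) with hpdef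
  set D := 3 * β ^ 2 * lam ^ 2 + α ^ 2 + 3 * β * δ with hDdef
  have hD : 0 ≤ D := by
    rcases lt_or_ge 0 (α^2 + 3*β*δ) with h | h
    · nlinarith [sq_nonneg (β*lam)]
    · have hl := hlam2 (by linarith)
      have hs2 : Real.sqrt (-(α^2 + 3*β*δ)) ^ 2 = -(α^2 + 3*β*δ) := Real.sq_sqrt (by linarith)
      have hsn : 0 ≤ Real.sqrt (-(α^2 + 3*β*δ)) := Real.sqrt_nonneg _
      have h3β : (0:ℝ) < 3*β := by linarith
      rw [div_lt_iff₀ h3β] at hl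
      nlinarith [sq_nonneg lam, mul_pos h3β h3β]
  set S := Real.sqrt D with hSdef
  have hS2 : S^2 = D := Real.sq_sqrt hD
  have hS0 : 0 ≤ S := Real.sqrt_nonneg _
  have hLS : L = (α - S) / (3*β) := rfl
  have h3β : (0:ℝ) < 3*β := by linarith
  have hLa0 : L ≤ α / (3*β) := by
    rw [hLS]
    gcongr
    linarith
  -- quadratic lower bound
  have hsq : ∀ m : ℝ, m ≤ L → (L - m)^2 ≤ 3*(m - α/(3*β))^2 - (α^2 + 3*β*δ)/(3*β^2) := by
    intro m hm
    have hiden : 3*(m - α/(3*β))^2 - (α^2 + 3*β*δ)/(3*β^2)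
        = lam^2 + 3*(L - m)^2 + 6*(L - m)*(α/(3*β) - L) := by
      rw [hLS]
      field_simp
      ring_nf
      linear_combination 3 * hS2
    nlinarith [sq_nonneg lam, sq_nonneg (L - m),
      mul_nonneg (sub_nonneg.2 hm) (sub_nonneg.2 hLa0)]
  have hs0 : ∀ m, 0 ≤ sf m := fun m => Real.sqrt_nonneg _
  have hs_low : ∀ m, m ≤ L → L - m ≤ sf m := by
    intro m hm
    rcases le_or_gt (L - m) 0 with h | h
    · exact le_trans h (hs0 m)
    · rw [hsfdef]
      unfold sHNLS
      rw [Real.le_sqrt' h]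
      exact hsq m hm
  have hconts : Continuous sf := by
    rw [hsfdef]; unfold sHNLS
    apply Real.continuous_sqrt.comp
    continuity
  have hcontp : Continuous p := by
    rw [hpdef]
    exact Real.continuous_exp.comp ((continuous_const.mul hconts).neg)
  have hpos : ∀ m, 0 < p m := fun m => Real.exp_pos _
  have hone : ∀ m, p m ≤ 1 := by
    intro m
    rw [hpdef]
    simp only
    rw [Real.exp_le_one_iff]
    have := mul_nonneg hz.le (hs0 m)
    linarith
  have hmono : ∀ m1 m2, m1 ≤ m2 → m2 ≤ L → p m1 ≤ p m2 := by
    intro m1 m2 h12 h2L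
    rw [hpdef]
    simp only
    rw [Real.exp_le_exp]
    have hss : sf m2 ≤ sf m1 := by
      rw [hsfdef]; unfold sHNLS
      apply Real.sqrt_le_sqrt
      have h1L : m1 ≤ L := le_trans h12 h2L
      nlinarith [le_trans h2L hLa0, le_trans h1L hLa0]
    nlinarith [hz.le]
  have hint : IntegrableOn p (Iic L) volume := by
    have h0 : Integrable ((Iic (0:ℝ)).indicator Real.exp) volume := by
      rw [integrable_indicator_iff measurableSet_Iic]
      exact integrableOn_exp_Iic 0
    have h2 : Integrable (fun m : ℝ => (Iic (0:ℝ)).indicator Real.exp (z * (m - L))) volume := by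
      have := (h0.comp_sub_right (z*L)).comp_mul_left' (R := z) (ne_of_gt hz)
      apply this.congr
      apply Filter.Eventually.of_forall
      intro m
      simp only [mul_sub]
    apply Integrable.mono' (h2.integrableOn (s := Iic L)) hcontp.aestronglyMeasurable.restrict
    apply (ae_restrict_iff' measurableSet_Iic).2
    apply Filter.Eventually.of_forall
    intro m hm
    simp only [mem_Iic] at hm
    have hmem : z * (m - L) ∈ Iic (0:ℝ) := by
      simp only [mem_Iic]
      nlinarith
    rw [indicator_of_mem hmem]
    rw [Real.norm_eq_abs, Real.abs_exp, Real.exp_le_exp]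
    have := mul_le_mul_of_nonneg_left (hs_low m hm) hz.le
    nlinarith
  have htend : Tendsto p atBot (nhds 0) := by
    apply Real.tendsto_exp_atBot.comp
    apply tendsto_atBot_mono' atBot (f₁ := fun m => -(z * (L - m)))
    · filter_upwards [eventually_le_atBot L] with m hm
      have := mul_le_mul_of_nonneg_left (hs_low m hm) hz.le
      show -(z * sf m) ≤ -(z * (L - m))
      linarith
    · have h1 : Tendsto (fun m : ℝ => z * (L - m)) atBot atTop := by
        apply Tendsto.const_mul_atTop hz
        have : Tendsto (fun m : ℝ => -m) atBot atTop := tendsto_neg_atBot_atTop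
        have h2 := tendsto_atTop_add_const_left atBot L this
        apply h2.congr
        intro m; ring
      exact (tendsto_neg_atTop_atBot).comp h1
  -- rewrite kernel
  set c3 : ℝ := -8*β*t with hc3def
  set c2 : ℝ := 8*α*t with hc2def
  set c1 : ℝ := (x - y) + 2*t*(δ - α^2/β) with hc1def
  set c0 : ℝ := -(t*(α*δ/β)) with hc0def
  have hc3 : c3 ≠ 0 := by
    rw [hc3def, show (-8)*β*t = (-8)*(β*t) by ring]
    exact mul_ne_zero (by norm_num) (mul_ne_zero hβ.ne' ht)
  have hphase : ∀ m, phaseHNLS α β δ m x y t = cub c3 c2 c1 c0 m := by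
    intro m
    rw [hc3def, hc2def, hc1def, hc0def]
    unfold phaseHNLS cub
    ring
  have hker_eq : kernelHNLS α β δ lam x y z t = ∫ m in Iic L, oscf c3 c2 c1 c0 m * ((p m : ℝ) : ℂ) := by
    unfold kernelHNLS
    apply MeasureTheory.integral_congr_ae
    apply Filter.Eventually.of_forall
    intro m
    beta_reduce
    rw [hphase m]
    rfl
  have hmain := kernel_bound (c2 := c2) (c1 := c1) (c0 := c0) hc3 L p hcontp hpos hone hmono hint htend
  rw [hker_eq]
  refine le_trans hmain ?_
  -- arithmetic
  have habs : 6 * |c3| = 48*β*|t| := by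
    rw [hc3def, show (-8)*β*t = (-8)*(β*t) by ring, abs_mul, abs_mul,
      abs_of_nonneg hβ.le]
    norm_num
    ring
  rw [habs]
  have htpos : (0:ℝ) < |t| := abs_pos.2 ht
  rw [show (48*β*|t| : ℝ) = (48*β)*|t| by ring,
    Real.mul_rpow (by positivity) (abs_nonneg t),
    show (-(1:ℝ)/3) = -((1:ℝ)/3) by ring,
    Real.rpow_neg (abs_nonneg t)]
  rw [div_mul_eq_div_div, div_eq_mul_inv]
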